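/- Fix k ≥ 2 and ℓ ≥ 2k−1, and let I = { i ∈ [k, ℓ−k+1] : i ≢ −1 (mod k) }. For every permutation π of [n] and every vertex x = {a_1 < ... < a_ℓ} of the shift hypergraph Sh^{(k)}(n, ℓ), let ν(x, π) be the index j with π(a_j) maximal among π(a_1), ..., π(a_ℓ). Then the set Y_π = { x ∈ V(Sh^{(k)}(n, ℓ)) : ν(x, π) ∈ I } is an independent set in Sh^{(k)}(n, ℓ). -/
import Mathlib


/-- In the shift hypergraph `Sh^(k)(n, ℓ)`, for a permutation `π` of `[n]` the set
`Y_π` of vertices whose argmax position (1-indexed) lies in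
`I = {j ∈ [k, ℓ-k+1] : j ≢ -1 (mod k)}` is independent: no edge, given by an
increasing sequence `a 0 < a 1 < ⋯ < a (k+ℓ-2)` in `[n]` with windows
`x_i = {a i, …, a (i+ℓ-1)}` for `i < k`, has all its vertices in `Y_π`. -/
theorem shift_hypergraph_Ypi_independent (k ℓ n : ℕ) (hk : 2 ≤ k)
    (hℓ : 2 * k - 1 ≤ ℓ)
    (π : ℕ → ℕ) (hπinj : Set.InjOn π ↑(Finset.Icc 1 n))
    (hπmaps : Set.MapsTo π ↑(Finset.Icc 1 n) ↑(Finset.Icc 1 n))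
    (a : ℕ → ℕ) (ha : StrictMono a) (haN : ∀ j < k + ℓ - 1, a j ∈ Finset.Icc 1 n) :
    ¬ ∀ i < k, ∃ j : ℕ, 1 ≤ j ∧ j ≤ ℓ ∧
        (∀ t < ℓ, π (a (i + t)) ≤ π (a (i + j - 1))) ∧
        k ≤ j ∧ j ≤ ℓ - k + 1 ∧ ¬ (k ∣ j + 1) := by
  intro h
  choose j h1 h2 h3 h4 h5 h6 using h
  have hk0 : 0 < k := by omega
  -- all window argmax indices coincide
  have hple : ∀ i (hi : i < k) i' (hi' : i' < k),
      π (a (i + j i hi - 1)) ≤ π (a (i' + j i' hi' - 1)) := by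
    intro i hi i' hi'
    have h4i := h4 i hi
    have h5i := h5 i hi
    have hp2 : i + j i hi - 1 ≤ ℓ - 1 := by omega
    have ht : i' + (i + j i hi - 1 - i') = i + j i hi - 1 := by omega
    have := h3 i' hi' (i + j i hi - 1 - i') (by omega)
    rwa [ht] at this
  have hpeq : ∀ i (hi : i < k), i + j i hi - 1 = 0 + j 0 hk0 - 1 := by
    intro i hi
    have hval : π (a (i + j i hi - 1)) = π (a (0 + j 0 hk0 - 1)) :=
      le_antisymm (hple i hi 0 hk0) (hple 0 hk0 i hi)
    have hmem : ∀ i' (hi' : i' < k), a (i' + j i' hi' - 1) ∈ Finset.Icc 1 n := by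
      intro i' hi'
      have h4i := h4 i' hi'
      have h5i := h5 i' hi'
      exact haN _ (by omega)
    have : a (i + j i hi - 1) = a (0 + j 0 hk0 - 1) :=
      hπinj (hmem i hi) (hmem 0 hk0) hval
    exact ha.injective this
  set m := j 0 hk0 with hm
  have hmk : k ≤ m := h4 0 hk0
  have hi : (m + 1) % k < k := Nat.mod_lt _ hk0
  have heq := hpeq ((m + 1) % k) hi
  have h1i := h1 ((m + 1) % k) hi
  have hilt : (m + 1) % k < k := hi
  have hdm := Nat.div_add_mod (m + 1) k
  apply h6 ((m + 1) % k) hi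
  exact ⟨(m + 1) / k, by omega⟩
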